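/- Let V be a finite-dimensional real inner product space and let U, W be linear subspaces of V with dim U = m ≤ dim W. Let π_W and π_U denote the orthogonal projections of V onto W and onto U, respectively. Then dim π_W(U) = dim U if and only if π_U(W) = U (i.e., the image of W under π_U is all of U). -/

import Mathlib

open Module Submodule

lemma ker_adjoint_eq_orthogonal_range {E F : Type*} [NormedAddCommGroup E]
    [InnerProductSpace ℝ E] [FiniteDimensional ℝ E] [NormedAddCommGroup F]
    [InnerProductSpace ℝ F] [FiniteDimensional ℝ F] (f : E →ₗ[ℝ] F) :
    LinearMap.ker (LinearMap.adjoint f) = (LinearMap.range f)ᗮ := by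
  ext y
  simp only [LinearMap.mem_ker, Submodule.mem_orthogonal]
  constructor
  · rintro h x ⟨z, rfl⟩
    rw [← LinearMap.adjoint_inner_right, h, inner_zero_right]
  · intro h
    rw [← inner_self_eq_zero (𝕜 := ℝ), LinearMap.adjoint_inner_left, real_inner_comm]
    exact h _ ⟨_, rfl⟩

lemma finrank_range_adjoint {E F : Type*} [NormedAddCommGroup E]
    [InnerProductSpace ℝ E] [FiniteDimensional ℝ E] [NormedAddCommGroup F]
    [InnerProductSpace ℝ F] [FiniteDimensional ℝ F] (f : E →ₗ[ℝ] F) :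
    finrank ℝ (LinearMap.range (LinearMap.adjoint f)) = finrank ℝ (LinearMap.range f) := by
  have h1 := LinearMap.finrank_range_add_finrank_ker (LinearMap.adjoint f)
  rw [ker_adjoint_eq_orthogonal_range] at h1
  have h2 := Submodule.finrank_add_finrank_orthogonal (K := LinearMap.range f)
  omega

/-- Lemma: let `V` be a finite-dimensional real inner product space and
`U, W` subspaces with `dim U ≤ dim W`. Then `dim π_W(U) = dim U` iff
`π_U(W) = U`, where `π_K` denotes orthogonal projection onto `K`. -/
theorem finrank_orthogonalProjection_image_eq_iff
    {V : Type*} [NormedAddCommGroup V] [InnerProductSpace ℝ V] [FiniteDimensional ℝ V]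
    (U W : Submodule ℝ V) (hdim : Module.finrank ℝ U ≤ Module.finrank ℝ W) :
    Module.finrank ℝ (U.map (orthogonalProjection W).toLinearMap) = Module.finrank ℝ U ↔
      W.map (orthogonalProjection U).toLinearMap = ⊤ := by
  set f : U →ₗ[ℝ] W := (orthogonalProjection W).toLinearMap ∘ₗ U.subtype with hf
  set g : W →ₗ[ℝ] U := (orthogonalProjection U).toLinearMap ∘ₗ W.subtype with hg
  have hfg : f = LinearMap.adjoint g := by
    rw [LinearMap.eq_adjoint_iff]
    intro u w
    simp [hf, hg]
  have hrangef : LinearMap.range f = U.map (orthogonalProjection W).toLinearMap := by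
    rw [hf, LinearMap.range_comp, Submodule.range_subtype]
  have hrangeg : LinearMap.range g = W.map (orthogonalProjection U).toLinearMap := by
    rw [hg, LinearMap.range_comp, Submodule.range_subtype]
  have hrank : finrank ℝ (LinearMap.range f) = finrank ℝ (LinearMap.range g) := by
    rw [hfg, finrank_range_adjoint]
  rw [← hrangef, ← hrangeg, hrank]
  constructor
  · intro h
    apply Submodule.eq_top_of_finrank_eq
    simpa using h
  · intro h
    rw [h, finrank_top]
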